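/- If n is a positive integer all of whose prime divisors are congruent to 1 mod 4, then both n and 2n can be expressed in the form a² + b² with a and b coprime integers. -/

import Mathlib

/-- From a non-coprime pair, extract a common prime divisor (unless both are zero). -/
lemma exists_prime_dvd_int {e f : ℤ} (h : ¬ IsCoprime e f) (hne : e ≠ 0 ∨ f ≠ 0) :
    ∃ q : ℤ, Prime q ∧ q ∣ e ∧ q ∣ f := by
  have hg1 : Int.gcd e f ≠ 1 := fun hg => h (Int.isCoprime_iff_gcd_eq_one.mpr hg)
  obtain ⟨q, hq, hqd⟩ := Nat.exists_prime_and_dvd hg1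
  refine ⟨(q : ℤ), Nat.prime_iff_prime_int.mp hq, ?_, ?_⟩
  · exact dvd_trans (Int.natCast_dvd_natCast.mpr hqd) (Int.gcd_dvd_left e f)
  · exact dvd_trans (Int.natCast_dvd_natCast.mpr hqd) (Int.gcd_dvd_right e f)

lemma aux_p_dvd {p a b c d e f : ℤ} (hp : Prime p) (hab : IsCoprime a b)
    (h1 : e * c + f * d = a * p) (h2 : f * c - e * d = b * p)
    (hnc : ¬ IsCoprime e f) : p ∣ e ∧ p ∣ f := by
  have hef : e ≠ 0 ∨ f ≠ 0 := by
    by_contra hcon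
    push_neg at hcon
    obtain ⟨he0, hf0⟩ := hcon
    subst he0; subst hf0
    simp only [zero_mul, add_zero, sub_zero, zero_add] at h1 h2
    have ha : a = 0 := by
      rcases mul_eq_zero.mp h1.symm with h | h
      · exact h
      · exact absurd h hp.ne_zero
    have hb : b = 0 := by
      rcases mul_eq_zero.mp h2.symm with h | h
      · exact h
      · exact absurd h hp.ne_zero
    subst ha; subst hb
    exact not_isCoprime_zero_zero hab
  obtain ⟨q, hq, hqe, hqf⟩ := exists_prime_dvd_int hnc hef
  have hqap : q ∣ a * p := h1 ▸ dvd_add (hqe.mul_right c) (hqf.mul_right d)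
  have hqbp : q ∣ b * p := h2 ▸ dvd_sub (hqf.mul_right c) (hqe.mul_right d)
  have hqp : q ∣ p := by
    rcases hq.dvd_mul.mp hqap with hqa | hqp
    · rcases hq.dvd_mul.mp hqbp with hqb | hqp
      · exact absurd (hab.isUnit_of_dvd' hqa hqb) hq.not_unit
      · exact hqp
    · exact hqp
  have hpq : p ∣ q := ((hq.associated_of_dvd hp hqp).symm).dvd
  exact ⟨hpq.trans hqe, hpq.trans hqf⟩

/-- Composition: multiply a primitive representation by a primitive prime representation. -/
lemma comp_lemma {p a b c d : ℤ} (hp : Prime p) (hpodd : ¬ p ∣ (2 : ℤ))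
    (hab : IsCoprime a b) (hcd : IsCoprime c d) (hcdp : c ^ 2 + d ^ 2 = p) :
    ∃ e f : ℤ, IsCoprime e f ∧ e ^ 2 + f ^ 2 = (a ^ 2 + b ^ 2) * p := by
  by_cases h1 : IsCoprime (a * c - b * d) (a * d + b * c)
  · exact ⟨_, _, h1, by rw [← hcdp]; ring⟩
  by_cases h2 : IsCoprime (a * c + b * d) (a * d - b * c)
  · exact ⟨_, _, h2, by rw [← hcdp]; ring⟩
  exfalso
  have H1 : p ∣ (a * c - b * d) ∧ p ∣ (a * d + b * c) :=
    aux_p_dvd (c := c) (d := d) (e := a * c - b * d) (f := a * d + b * c) hp hab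
      (by rw [← hcdp]; ring) (by rw [← hcdp]; ring) h1
  have H2 : p ∣ (a * c + b * d) ∧ p ∣ (a * d - b * c) :=
    aux_p_dvd (c := c) (d := d) (e := a * c + b * d) (f := a * d - b * c) hp hab.neg_right
      (by rw [← hcdp]; ring) (by rw [← hcdp]; ring) h2
  have pac : p ∣ a * c := by
    have h2ac : p ∣ 2 * (a * c) := by
      have := dvd_add H1.1 H2.1
      have heq : (a * c - b * d) + (a * c + b * d) = 2 * (a * c) := by ring
      rwa [heq] at this
    exact (hp.dvd_mul.mp h2ac).resolve_left hpodd
  have pbd : p ∣ b * d := by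
    have h2bd : p ∣ 2 * (b * d) := by
      have := dvd_sub H2.1 H1.1
      have heq : (a * c + b * d) - (a * c - b * d) = 2 * (b * d) := by ring
      rwa [heq] at this
    exact (hp.dvd_mul.mp h2bd).resolve_left hpodd
  have pad : p ∣ a * d := by
    have h2ad : p ∣ 2 * (a * d) := by
      have := dvd_add H1.2 H2.2
      have heq : (a * d + b * c) + (a * d - b * c) = 2 * (a * d) := by ring
      rwa [heq] at this
    exact (hp.dvd_mul.mp h2ad).resolve_left hpodd
  have pbc : p ∣ b * c := by
    have h2bc : p ∣ 2 * (b * c) := by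
      have := dvd_sub H1.2 H2.2
      have heq : (a * d + b * c) - (a * d - b * c) = 2 * (b * c) := by ring
      rwa [heq] at this
    exact (hp.dvd_mul.mp h2bc).resolve_left hpodd
  have notab : ¬ (p ∣ a ∧ p ∣ b) := fun ⟨ha, hb⟩ =>
    hp.not_unit (hab.isUnit_of_dvd' ha hb)
  have notcd : ¬ (p ∣ c ∧ p ∣ d) := fun ⟨hc, hd⟩ =>
    hp.not_unit (hcd.isUnit_of_dvd' hc hd)
  rcases hp.dvd_mul.mp pac with ha | hc
  · rcases hp.dvd_mul.mp pbc with hb | hc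
    · exact notab ⟨ha, hb⟩
    · rcases hp.dvd_mul.mp pbd with hb | hd
      · exact notab ⟨ha, hb⟩
      · exact notcd ⟨hc, hd⟩
  · rcases hp.dvd_mul.mp pad with ha | hd
    · rcases hp.dvd_mul.mp pbd with hb | hd
      · exact notab ⟨ha, hb⟩
      · exact notcd ⟨hc, hd⟩
    · exact notcd ⟨hc, hd⟩

lemma prime_rep (p : ℕ) (hp : p.Prime) (h4 : p % 4 = 1) :
    ∃ a b : ℤ, IsCoprime a b ∧ (p : ℤ) = a ^ 2 + b ^ 2 := by
  haveI : Fact p.Prime := ⟨hp⟩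
  obtain ⟨a, b, hab⟩ := Nat.Prime.sq_add_sq (p := p) (by omega)
  refine ⟨(a : ℤ), (b : ℤ), ?_, by exact_mod_cast hab.symm⟩
  rw [Int.isCoprime_iff_gcd_eq_one]
  have : Int.gcd (a : ℤ) (b : ℤ) = Nat.gcd a b := by
    simp [Int.gcd, Int.natAbs_natCast]
  rw [this]
  set g := Nat.gcd a b with hg
  have hga : g ∣ a := Nat.gcd_dvd_left a b
  have hgb : g ∣ b := Nat.gcd_dvd_right a b
  have hgp : g ∣ p := by
    have := dvd_add (dvd_pow hga two_ne_zero) (dvd_pow hgb two_ne_zero)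
    rwa [hab] at this
  rcases hp.eq_one_or_self_of_dvd g hgp with h1 | hgp'
  · exact h1
  · exfalso
    have hpa : p ∣ a := hgp' ▸ hga
    have hpb : p ∣ b := hgp' ▸ hgb
    have : p ^ 2 ∣ p := by
      have := dvd_add (pow_dvd_pow_of_dvd hpa 2) (pow_dvd_pow_of_dvd hpb 2)
      rwa [hab] at this
    have hle := Nat.le_of_dvd hp.pos this
    nlinarith [hp.two_le]

lemma odd_rep : ∀ n : ℕ, 1 ≤ n → (∀ p : ℕ, p.Prime → p ∣ n → p % 4 = 1) →
    ∃ a b : ℤ, IsCoprime a b ∧ (n : ℤ) = a ^ 2 + b ^ 2 := by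
  intro n
  induction n using Nat.strong_induction_on with
  | _ n ih =>
    intro hn h
    rcases eq_or_lt_of_le hn with h1 | h1
    · exact ⟨1, 0, isCoprime_one_left, by rw [← h1]; norm_num⟩
    · obtain ⟨p, hp, hpn⟩ := Nat.exists_prime_and_dvd (by omega : n ≠ 1)
      have hp4 : p % 4 = 1 := h p hp hpn
      obtain ⟨m, hm⟩ := hpn
      have hm1 : 1 ≤ m := Nat.pos_of_ne_zero (fun h0 => by subst h0; simp at hm; omega)
      have hmn : m < n := by
        have : 2 ≤ p := hp.two_le
        calc m < p * m := by nlinarith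
        _ = n := hm.symm
      obtain ⟨a, b, hab, habm⟩ := ih m hmn hm1
        (fun q hq hqm => h q hq (hm ▸ hqm.mul_left p))
      obtain ⟨c, d, hcd, hcdp⟩ := prime_rep p hp hp4
      have hpprime : Prime (p : ℤ) := Nat.prime_iff_prime_int.mp hp
      have hpodd : ¬ (p : ℤ) ∣ (2 : ℤ) := by
        intro hdvd
        have h2 : p ∣ 2 := by exact_mod_cast hdvd
        have hle := Nat.le_of_dvd (by norm_num) h2
        have := hp.two_le
        omega
      obtain ⟨e, f, hef, hefeq⟩ := comp_lemma hpprime hpodd hab hcd hcdp.symm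
      refine ⟨e, f, hef, ?_⟩
      rw [hefeq, ← habm, hm]
      push_cast
      ring

theorem stmt_4 (n : ℕ) (hn : 1 ≤ n)
    (h : ∀ p : ℕ, p.Prime → p ∣ n → p % 4 = 1) :
    (∃ a b : ℤ, IsCoprime a b ∧ (n : ℤ) = a^2 + b^2) ∧
    (∃ a b : ℤ, IsCoprime a b ∧ (2 * n : ℤ) = a^2 + b^2) := by
  obtain ⟨a, b, hab, habn⟩ := odd_rep n hn h
  have hnodd : ¬ (2 : ℕ) ∣ n := by
    intro h2
    have := h 2 Nat.prime_two h2
    omega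
  refine ⟨⟨a, b, hab, habn⟩, ⟨a + b, a - b, ?_, by rw [habn]; push_cast; ring⟩⟩
  by_contra hnc
  have hne : a + b ≠ 0 ∨ a - b ≠ 0 := by
    by_contra hcon
    push_neg at hcon
    have ha0 : a = 0 := by omega
    have hb0 : b = 0 := by omega
    subst ha0; subst hb0
    exact not_isCoprime_zero_zero hab
  obtain ⟨q, hq, hq1, hq2⟩ := exists_prime_dvd_int hnc hne
  have hq2a : q ∣ 2 * a := by
    have := dvd_add hq1 hq2
    have heq : (a + b) + (a - b) = 2 * a := by ring
    rwa [heq] at this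
  have hq2b : q ∣ 2 * b := by
    have := dvd_sub hq1 hq2
    have heq : (a + b) - (a - b) = 2 * b := by ring
    rwa [heq] at this
  rcases hq.dvd_mul.mp hq2a with hq2' | hqa
  · -- q ∣ 2, so 2 ∣ a+b and 2 ∣ a-b, so 4 ∣ 2n, so 2 ∣ n
    have h2q : (2 : ℤ) ∣ q := ((hq.associated_of_dvd Int.prime_two hq2').symm).dvd
    have h21 : (2 : ℤ) ∣ a + b := h2q.trans hq1
    have h22 : (2 : ℤ) ∣ a - b := h2q.trans hq2
    obtain ⟨u, hu⟩ := h21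
    obtain ⟨v, hv⟩ := h22
    have h4 : (4 : ℤ) ∣ 2 * (n : ℤ) := by
      have : 2 * (n : ℤ) = (a + b) ^ 2 + (a - b) ^ 2 := by rw [habn]; ring
      rw [this, hu, hv]
      exact ⟨u ^ 2 + v ^ 2, by ring⟩
    have h2n : (2 : ℤ) ∣ (n : ℤ) := by
      obtain ⟨k, hk⟩ := h4
      exact ⟨k, by linarith⟩
    exact hnodd (by exact_mod_cast h2n)
  · rcases hq.dvd_mul.mp hq2b with hq2' | hqb
    · have h2q : (2 : ℤ) ∣ q := ((hq.associated_of_dvd Int.prime_two hq2').symm).dvd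
      have h21 : (2 : ℤ) ∣ a + b := h2q.trans hq1
      have h22 : (2 : ℤ) ∣ a - b := h2q.trans hq2
      obtain ⟨u, hu⟩ := h21
      obtain ⟨v, hv⟩ := h22
      have h4 : (4 : ℤ) ∣ 2 * (n : ℤ) := by
        have : 2 * (n : ℤ) = (a + b) ^ 2 + (a - b) ^ 2 := by rw [habn]; ring
        rw [this, hu, hv]
        exact ⟨u ^ 2 + v ^ 2, by ring⟩
      have h2n : (2 : ℤ) ∣ (n : ℤ) := by
        obtain ⟨k, hk⟩ := h4
        exact ⟨k, by linarith⟩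
      exact hnodd (by exact_mod_cast h2n)
    · exact hq.not_unit (hab.isUnit_of_dvd' hqa hqb)
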